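/- Let A be a finite-dimensional hereditary algebra and Ā its duplicated algebra. Every finitely generated A-module M, regarded as an Ā-module via the canonical surjection Ā → A, has projective dimension at most 1 over Ā. -/

import Mathlib

open TrivSqZeroExt Module CategoryTheory

universe u

section Gen
variable (R : Type u) [Ring R]

/-- A module is indecomposable: nonzero and admitting no nontrivial direct sum decomposition. -/
def Indec (M : ModuleCat.{u} R) : Prop :=
  (⊥ : Submodule R M) ≠ ⊤ ∧ ∀ U V : Submodule R M, IsCompl U V → U = ⊥ ∨ V = ⊥

/-- projective dimension at most `n` -/
def PDimLE : ℕ → ModuleCat.{u} R → Prop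
  | 0, M => Module.Projective R M
  | (n+1), M => ∃ (P : ModuleCat.{u} R) (g : P →ₗ[R] M), Module.Projective R P ∧
      Function.Surjective g ∧ PDimLE n (ModuleCat.of R (LinearMap.ker g))

/-- injective dimension at most 1 -/
def IDimLE1 (M : ModuleCat.{u} R) : Prop :=
  ∃ (I : ModuleCat.{u} R) (f : M →ₗ[R] I), Module.Injective R I ∧ Function.Injective f ∧
    Module.Injective R ((I : Type u) ⧸ LinearMap.range f)

/-- one step in a path: a nonzero morphism between indecomposables -/
def NZHom (M N : ModuleCat.{u} R) : Prop :=
  Indec R M ∧ Indec R N ∧ ∃ f : M →ₗ[R] N, f ≠ 0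

/-- there is a path of nonzero morphisms between indecomposables from `M` to `N` -/
def IsPath (M N : ModuleCat.{u} R) : Prop :=
  Indec R M ∧ Indec R N ∧ Relation.ReflTransGen (NZHom R) M N

/-- `M` lies in the left part `L` of the module category -/
def InLeftPart (M : ModuleCat.{u} R) : Prop :=
  Indec R M ∧ ∀ L : ModuleCat.{u} R, IsPath R L M → PDimLE R 1 L

/-- `M` lies in the right part `R` of the module category -/
def InRightPart (M : ModuleCat.{u} R) : Prop :=
  Indec R M ∧ ∀ N : ModuleCat.{u} R, IsPath R M N → IDimLE1 R N

/-- Ext¹(Z,Y) = 0: every short exact sequence 0 → Y → E → Z → 0 splits. -/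
def Ext1Vanish (Z Y : ModuleCat.{u} R) : Prop :=
  ∀ (E : ModuleCat.{u} R) (f : Y →ₗ[R] E) (g : E →ₗ[R] Z),
    Function.Injective f → Function.Surjective g → Function.Exact f g →
      ∃ s : Z →ₗ[R] E, g.comp s = LinearMap.id

/-- Ext^n(Z,Y) = 0, defined by dimension shifting. -/
def ExtVanish : ℕ → ModuleCat.{u} R → ModuleCat.{u} R → Prop
  | 0, _, _ => True
  | 1, Z, Y => Ext1Vanish R Z Y
  | (n+2), Z, Y => ∀ (P : ModuleCat.{u} R) (g : P →ₗ[R] Z),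
      Module.Projective R P → Function.Surjective g →
        ExtVanish (n+1) (ModuleCat.of R (LinearMap.ker g)) Y

/-- an almost split (Auslander-Reiten) sequence 0 → X → E → Z → 0 -/
def AlmostSplitSeq (X E Z : ModuleCat.{u} R) (f : X →ₗ[R] E) (g : E →ₗ[R] Z) : Prop :=
  Function.Injective f ∧ Function.Surjective g ∧ Function.Exact f g ∧
  Indec R X ∧ Indec R Z ∧
  (¬ ∃ s : Z →ₗ[R] E, g.comp s = LinearMap.id) ∧
  (∀ (W : ModuleCat.{u} R) (h : W →ₗ[R] Z),
     (¬ ∃ s : Z →ₗ[R] W, h.comp s = LinearMap.id) → ∃ u : W →ₗ[R] E, g.comp u = h)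

/-- `N` is an inverse Auslander-Reiten translate `τ⁻¹ M` (realized by an almost split sequence) -/
def IsTauInv (M N : ModuleCat.{u} R) : Prop :=
  ∃ (E : ModuleCat.{u} R) (f : M →ₗ[R] E) (g : E →ₗ[R] N), AlmostSplitSeq R M E N f g

/-- `N` is the Auslander-Reiten translate `τ M` -/
def IsTau (M N : ModuleCat.{u} R) : Prop := IsTauInv R N M

/-- `f : M → I` is an injective envelope -/
def IsInjEnvelope (M I : ModuleCat.{u} R) (f : M →ₗ[R] I) : Prop :=
  Module.Injective R I ∧ Function.Injective f ∧
    ∀ U : Submodule R I, U ≠ ⊥ → U ⊓ LinearMap.range f ≠ ⊥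

/-- `p : P → M` is a projective cover -/
def IsProjCover (P M : ModuleCat.{u} R) (p : P →ₗ[R] M) : Prop :=
  Module.Projective R P ∧ Function.Surjective p ∧
    ∀ U : Submodule R P, U ⊔ LinearMap.ker p = ⊤ → U = ⊤

/-- `N` is a first cosyzygy `Ω⁻¹ M` -/
def IsCosyzygy (M N : ModuleCat.{u} R) : Prop :=
  ∃ (I : ModuleCat.{u} R) (f : M →ₗ[R] I), IsInjEnvelope R M I f ∧
    Nonempty (N ≃ₗ[R] ((I : Type u) ⧸ LinearMap.range f))

/-- `X` is a direct summand of `Y` -/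
def DirectSummand (X Y : ModuleCat.{u} R) : Prop :=
  ∃ (i : X →ₗ[R] Y) (r : Y →ₗ[R] X), r.comp i = LinearMap.id

/-- `M` is projective-injective -/
def ProjInj (M : ModuleCat.{u} R) : Prop := Module.Projective R M ∧ Module.Injective R M

end Gen

section DupAlg
variable (k : Type u) [Field k] (A : Type u) [Ring A] [Algebra k A]

noncomputable instance dualModL : Module (A × A) (Module.Dual k A) where
  smul p q := q.comp (LinearMap.mulRight k p.2)
  one_smul q := by ext x; show q (x * 1) = q x; simp
  mul_smul p p' q := by ext x; show q (x * (p.2 * p'.2)) = q (x * p.2 * p'.2); rw [mul_assoc]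
  smul_zero p := by ext x; rfl
  smul_add p q q' := by ext x; rfl
  add_smul p p' q := by ext x; show q (x * (p.2 + p'.2)) = q (x * p.2) + q (x * p'.2); rw [mul_add, map_add]
  zero_smul q := by ext x; show q (x * 0) = 0; simp

noncomputable instance dualModR : Module (A × A)ᵐᵒᵖ (Module.Dual k A) where
  smul p q := q.comp (LinearMap.mulLeft k p.unop.1)
  one_smul q := by ext x; show q ((1 : A) * x) = q x; simp
  mul_smul p p' q := by
    ext x
    show q ((p'.unop.1 * p.unop.1) * x) = q (p'.unop.1 * (p.unop.1 * x))
    rw [mul_assoc]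
  smul_zero p := by ext x; rfl
  smul_add p q q' := by ext x; rfl
  add_smul p p' q := by
    ext x
    show q ((p.unop.1 + p'.unop.1) * x) = q (p.unop.1 * x) + q (p'.unop.1 * x)
    rw [add_mul, map_add]
  zero_smul q := by ext x; show q ((0 : A) * x) = 0; simp

instance dualSMulComm : SMulCommClass (A × A) (A × A)ᵐᵒᵖ (Module.Dual k A) where
  smul_comm p p' q := by
    ext x
    show q (p'.unop.1 * (x * p.2)) = q ((p'.unop.1 * x) * p.2)
    rw [mul_assoc]

/-- The duplicated algebra Ā = [[A,0],[DA,A]] of `A`, realized as the trivial extension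
of `A × A` by the bimodule `DA = Hom_k(A,k)`. -/
abbrev Dup := TrivSqZeroExt (A × A) (Module.Dual k A)

/-- the canonical surjection Ā → A onto the first diagonal copy of A -/
noncomputable def dupProj₁ : Dup k A →+* A where
  toFun x := x.fst.1
  map_one' := rfl
  map_mul' x y := by simp
  map_zero' := rfl
  map_add' x y := by simp

/-- the canonical surjection Ā → A onto the second diagonal copy of A -/
noncomputable def dupProj₂ : Dup k A →+* A where
  toFun x := x.fst.2
  map_one' := rfl
  map_mul' x y := by simp
  map_zero' := rfl
  map_add' x y := by simp

/-- Right modules over a ring are left modules over its opposite; this is the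
restriction functor from right A-modules to right Ā-modules along Ā → A (first copy),
that is, the standard embedding mod A ↪ mod Ā. -/
noncomputable abbrev resA : ModuleCat.{u} Aᵐᵒᵖ ⥤ ModuleCat.{u} (Dup k A)ᵐᵒᵖ :=
  ModuleCat.restrictScalars (RingHom.op (dupProj₁ k A))

/-- restriction along the second projection Ā → A' -/
noncomputable abbrev resA' : ModuleCat.{u} Aᵐᵒᵖ ⥤ ModuleCat.{u} (Dup k A)ᵐᵒᵖ :=
  ModuleCat.restrictScalars (RingHom.op (dupProj₂ k A))

/-- a right Ā-module "belongs to mod A": the kernel of Ā → A acts as zero,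
i.e. it is the restriction of an A-module along the first projection. -/
def ActsThroughA (M : ModuleCat.{u} (Dup k A)ᵐᵒᵖ) : Prop :=
  ∀ x : Dup k A, x.fst.1 = 0 → ∀ m : M, (MulOpposite.op x) • m = 0

/-- a right Ā-module is the restriction of an A'-module along the second projection. -/
def ActsThroughA' (M : ModuleCat.{u} (Dup k A)ᵐᵒᵖ) : Prop :=
  ∀ x : Dup k A, x.fst.2 = 0 → ∀ m : M, (MulOpposite.op x) • m = 0

/-- the idempotent e' of Ā -/
noncomputable def eDup' : Dup k A := TrivSqZeroExt.inl ((0, 1) : A × A)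

/-- the right ideal e'Ā of Ā, as a right Ā-module -/
noncomputable def eDupMod : ModuleCat.{u} (Dup k A)ᵐᵒᵖ :=
  ModuleCat.of (Dup k A)ᵐᵒᵖ (Submodule.span (Dup k A)ᵐᵒᵖ {eDup' k A})

/-- a ring is (left) hereditary: every (left) ideal is projective. Applied to `Aᵐᵒᵖ`
this says that `A` is right hereditary. -/
def IsHereditaryRing (B : Type u) [Ring B] : Prop :=
  ∀ I : Submodule B B, Module.Projective B I

end DupAlg

section Gen2
variable (R : Type u) [Ring R]

/-- `f` is a split monomorphism (section) -/
def IsSplitMonoL {X Y : ModuleCat.{u} R} (f : X →ₗ[R] Y) : Prop :=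
  ∃ r : Y →ₗ[R] X, r.comp f = LinearMap.id

/-- `f` is a split epimorphism (retraction) -/
def IsSplitEpiL {X Y : ModuleCat.{u} R} (f : X →ₗ[R] Y) : Prop :=
  ∃ s : Y →ₗ[R] X, f.comp s = LinearMap.id

/-- `f` is an irreducible morphism -/
def IrreducibleHom {X Y : ModuleCat.{u} R} (f : X →ₗ[R] Y) : Prop :=
  ¬ IsSplitMonoL R f ∧ ¬ IsSplitEpiL R f ∧
  ∀ (W : ModuleCat.{u} R) (g : X →ₗ[R] W) (h : W →ₗ[R] Y), h.comp g = f →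
    IsSplitMonoL R g ∨ IsSplitEpiL R h

/-- a path `M = M₀ → M₁ → ⋯ → M_t = N` of nonzero morphisms between indecomposables,
recorded with its data -/
structure MPath (M N : ModuleCat.{u} R) where
  len : ℕ
  obj : Fin (len + 1) → ModuleCat.{u} R
  hom : ∀ i : Fin len, obj i.castSucc →ₗ[R] obj i.succ
  indec : ∀ i, Indec R (obj i)
  nonzero : ∀ i, hom i ≠ 0
  first : obj 0 = M
  last : obj (Fin.last len) = N

/-- the path consists of irreducible morphisms -/
def MPath.IsIrr {M N : ModuleCat.{u} R} (p : MPath R M N) : Prop :=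
  ∀ i, IrreducibleHom R (p.hom i)

/-- the path is sectional: `τ M_{i+1} ≇ M_{i-1}` for all `i` -/
def MPath.Sectional {M N : ModuleCat.{u} R} (p : MPath R M N) : Prop :=
  ∀ (i : ℕ) (h : i + 2 ≤ p.len),
    ¬ IsTau R (p.obj ⟨i + 2, by omega⟩) (p.obj ⟨i, by omega⟩)

/-- `q` is a refinement of `p`: a longer path passing through the modules of `p` in order -/
def MPath.Refines {M N : ModuleCat.{u} R} (q p : MPath R M N) : Prop :=
  ∃ σ : Fin (p.len + 1) → Fin (q.len + 1), StrictMono σ ∧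
    σ 0 = 0 ∧ σ (Fin.last p.len) = Fin.last q.len ∧ ∀ i, q.obj (σ i) = p.obj i

/-- `M` is an indecomposable Ext-injective object of `add L` (the additive closure of the
left part): it is in the left part and `Ext¹(X, M) = 0` for every `X` in the left part -/
def ExtInjLeft (M : ModuleCat.{u} R) : Prop :=
  InLeftPart R M ∧ ∀ X : ModuleCat.{u} R, InLeftPart R X → Ext1Vanish R X M

/-- `T` is multiplicity-free: no indecomposable occurs twice as a direct summand -/
def MultFree (T : ModuleCat.{u} R) : Prop :=
  ∀ X : ModuleCat.{u} R, Indec R X →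
    ¬ DirectSummand R (ModuleCat.of R (Prod (X : Type u) (X : Type u))) T

/-- `X` belongs to `add T` -/
def InAdd (T X : ModuleCat.{u} R) : Prop :=
  ∃ n : ℕ, DirectSummand R X (ModuleCat.of R (Fin n → (T : Type u)))

/-- `M` admits a coresolution of length `n` by modules in `add T` -/
def CoresolvedBy (T : ModuleCat.{u} R) : ℕ → ModuleCat.{u} R → Prop
  | 0, M => InAdd R T M
  | (n+1), M => ∃ (T₀ : ModuleCat.{u} R) (f : M →ₗ[R] T₀), InAdd R T T₀ ∧
      Function.Injective f ∧
      CoresolvedBy T n (ModuleCat.of R ((T₀ : Type u) ⧸ LinearMap.range f))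

/-- `T` is a (generalized) tilting module: finite projective dimension, no self-extensions
in positive degrees, and the regular module has a finite coresolution in `add T` -/
def IsTiltingModule (T : ModuleCat.{u} R) : Prop :=
  (∃ n, PDimLE R n T) ∧ (∀ i, 0 < i → ExtVanish R i T T) ∧
  (∃ n, CoresolvedBy R T n (ModuleCat.of R R))

/-- `X` lies in the additive closure of the class `P` of modules -/
def InAddOf (P : ModuleCat.{u} R → Prop) (X : ModuleCat.{u} R) : Prop :=
  ∃ (n : ℕ) (D : Fin n → ModuleCat.{u} R), (∀ i, P (D i)) ∧
    DirectSummand R X (ModuleCat.of R ((i : Fin n) → (D i : Type u)))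

/-- the additive closure of the class `P` is contravariantly finite: every finitely
generated module has a right `add P`-approximation -/
def ContravariantlyFinite (P : ModuleCat.{u} R → Prop) : Prop :=
  ∀ M : ModuleCat.{u} R, Module.Finite R M →
    ∃ (X : ModuleCat.{u} R) (f : X →ₗ[R] M), InAddOf R P X ∧
      ∀ (X' : ModuleCat.{u} R) (g : X' →ₗ[R] M), InAddOf R P X' →
        ∃ h : X' →ₗ[R] X, f.comp h = g

/-- the additive closure of the class `P` is covariantly finite: every finitely
generated module has a left `add P`-approximation -/
def CovariantlyFinite (P : ModuleCat.{u} R → Prop) : Prop :=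
  ∀ M : ModuleCat.{u} R, Module.Finite R M →
    ∃ (X : ModuleCat.{u} R) (f : M →ₗ[R] X), InAddOf R P X ∧
      ∀ (X' : ModuleCat.{u} R) (g : M →ₗ[R] X'), InAddOf R P X' →
        ∃ h : X →ₗ[R] X', h.comp f = g

/-- isomorphism of simple modules, as a setoid -/
def simpleIsoSetoid : Setoid {S : ModuleCat.{u} R // IsSimpleModule R S} where
  r S T := Nonempty (S.1 ≃ₗ[R] T.1)
  iseqv := ⟨fun S => ⟨LinearEquiv.refl _ _⟩,
    fun ⟨e⟩ => ⟨e.symm⟩, fun ⟨e⟩ ⟨f⟩ => ⟨e.trans f⟩⟩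

/-- the number of isomorphism classes of simple `R`-modules (the rank of `K₀(R)`
for a finite dimensional algebra `R`) -/
noncomputable def NumSimples : ℕ := Nat.card (Quotient (simpleIsoSetoid R))

/-- the algebra is representation-finite -/
def RepFinite : Prop :=
  ∃ (n : ℕ) (Ls : Fin n → ModuleCat.{u} R), ∀ M : ModuleCat.{u} R,
    Module.Finite R M → Indec R M → ∃ i, Nonempty (M ≃ₗ[R] Ls i)

/-- the algebra is laura: only finitely many indecomposables lie outside `L ∪ R` -/
def LauraAlg : Prop :=
  ∃ (n : ℕ) (Ls : Fin n → ModuleCat.{u} R), ∀ M : ModuleCat.{u} R,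
    Module.Finite R M → Indec R M → ¬ InLeftPart R M → ¬ InRightPart R M →
      ∃ i, Nonempty (M ≃ₗ[R] Ls i)

end Gen2

section Cat
variable (C : Type u) [Category.{u} C] [Preadditive C] [Limits.HasBinaryBiproducts C]

/-- an object of an additive category is indecomposable -/
def IndecObjC (X : C) : Prop :=
  ¬ Limits.IsZero X ∧ ∀ Y Z : C, Nonempty (X ≅ Y ⊞ Z) →
    Limits.IsZero Y ∨ Limits.IsZero Z

end Cat

instance restrictScalarsAdditive {R S : Type u} [Ring R] [Ring S] (f : R →+* S) :
    (ModuleCat.restrictScalars.{u} f).Additive where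
  map_add := rfl



-- ### Auxiliary material for Statement 1 ###
open MulOpposite

section AuxHered

/-- hereditary: every ideal projective (copy of statement shape) -/
theorem proj_submodule_pi {B : Type u} [Ring B]
    (hB : ∀ I : Submodule B B, Module.Projective B I) :
    ∀ (n : ℕ) (K : Submodule B (Fin n → B)), Module.Projective B K := by
  intro n
  induction n with
  | zero =>
    intro K
    haveI : Subsingleton K := ⟨fun a b => Subtype.ext (Subsingleton.elim _ _)⟩
    refine (Module.projective_def).mpr ⟨0, fun x => Subsingleton.elim _ _⟩
  | succ n ih =>
    intro K
    classical
    let q : K →ₗ[B] B := (LinearMap.proj (Fin.last n)).comp K.subtype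
    haveI hI : Module.Projective B (LinearMap.range q) := hB _
    obtain ⟨s, hs⟩ := Module.projective_lifting_property q.rangeRestrict
      (LinearMap.id : LinearMap.range q →ₗ[B] LinearMap.range q) q.surjective_rangeRestrict
    -- kernel part
    let K0 := LinearMap.ker q
    let ρ : K0 →ₗ[B] (Fin n → B) :=
      { toFun := fun x i => (x.1 : Fin (n+1) → B) i.castSucc
        map_add' := fun x y => rfl
        map_smul' := fun c x => rfl }
    have hρ : Function.Injective ρ := by
      intro x y hxy
      ext i
      refine Fin.lastCases ?_ ?_ i
      · have hx : q x.1 = 0 := x.2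
        have hy : q y.1 = 0 := y.2
        show ((x.1 : Fin (n+1) → B) (Fin.last n)) = ((y.1 : Fin (n+1) → B) (Fin.last n))
        rw [show ((x.1 : Fin (n+1) → B) (Fin.last n)) = q x.1 from rfl, hx,
          show ((y.1 : Fin (n+1) → B) (Fin.last n)) = q y.1 from rfl, hy]
      · intro j
        exact congrFun hxy j
    haveI h0' : Module.Projective B (LinearMap.range ρ) := ih _
    haveI h0 : Module.Projective B K0 :=
      Module.Projective.of_equiv (LinearEquiv.ofInjective ρ hρ).symm
    -- split K ≃ K0 × range q
    have hker : ∀ x : K, x - s (q.rangeRestrict x) ∈ K0 := by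
      intro x
      have : q.rangeRestrict (s (q.rangeRestrict x)) = q.rangeRestrict x :=
        LinearMap.congr_fun hs (q.rangeRestrict x)
      have h2 : q (s (q.rangeRestrict x)) = q x := congrArg Subtype.val this
      show q (x - s (q.rangeRestrict x)) = 0
      rw [map_sub, h2, sub_self]
    let i : K →ₗ[B] K0 × (LinearMap.range q) :=
      LinearMap.prod
        ((LinearMap.id - s.comp q.rangeRestrict).codRestrict K0 hker)
        q.rangeRestrict
    let r : K0 × (LinearMap.range q) →ₗ[B] K :=
      K0.subtype.comp (LinearMap.fst _ _ _) + s.comp (LinearMap.snd _ _ _)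
    exact Module.Projective.of_split i r (LinearMap.ext fun x => by
      show (x - s (q.rangeRestrict x)) + s (q.rangeRestrict x) = x
      abel)

end AuxHered

section AuxDup
variable (k : Type u) [Field k] (A : Type u) [Ring A] [Algebra k A]

noncomputable def dupIncl (a : Aᵐᵒᵖ) : (Dup k A)ᵐᵒᵖ :=
  op (TrivSqZeroExt.inl ((a.unop, 0) : A × A))

lemma dupIncl_zero : dupIncl k A 0 = 0 := by
  simp [dupIncl]
  rfl

lemma dupIncl_add (a b : Aᵐᵒᵖ) : dupIncl k A (a + b) = dupIncl k A a + dupIncl k A b := by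
  show op (TrivSqZeroExt.inl (((a+b).unop, 0) : A × A))
      = op (TrivSqZeroExt.inl ((a.unop, 0) : A × A)) + op (TrivSqZeroExt.inl ((b.unop, 0) : A × A))
  rw [← MulOpposite.op_add, ← TrivSqZeroExt.inl_add, Prod.mk_add_mk, add_zero]
  rfl

lemma inl_mul_eq (a : A) (x : Dup k A) :
    (TrivSqZeroExt.inl ((a, 0) : A × A)) * x = TrivSqZeroExt.inl ((a * x.fst.1, 0) : A × A) := by
  refine TrivSqZeroExt.ext ?_ ?_
  · rw [TrivSqZeroExt.fst_mul, TrivSqZeroExt.fst_inl, TrivSqZeroExt.fst_inl, Prod.mk_mul_mk,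
      zero_mul]
  · rw [TrivSqZeroExt.snd_mul, TrivSqZeroExt.snd_inl, TrivSqZeroExt.snd_inl, smul_zero, add_zero]
    show x.snd.comp (LinearMap.mulRight k (0 : A)) = 0
    ext y
    simp

lemma dupIncl_smul (x : Dup k A) (a : Aᵐᵒᵖ) :
    (op x) • (dupIncl k A a) = dupIncl k A ((op x.fst.1) • a) := by
  show op x * op (TrivSqZeroExt.inl ((a.unop, 0) : A × A)) = _
  rw [← op_mul, inl_mul_eq]
  rfl

theorem projective_of_addEquiv {N NA : Type u} [AddCommGroup N]
    [Module (Dup k A)ᵐᵒᵖ N] [AddCommGroup NA] [Module Aᵐᵒᵖ NA] (e : N ≃+ NA)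
    (he : ∀ (x : Dup k A) (n : N), e ((op x) • n) = (op x.fst.1) • (e n))
    (hNA : Module.Projective Aᵐᵒᵖ NA) : Module.Projective (Dup k A)ᵐᵒᵖ N := by
  classical
  obtain ⟨sA, hsA⟩ := (Module.projective_def).mp hNA
  let F : (NA →₀ Aᵐᵒᵖ) → (N →₀ (Dup k A)ᵐᵒᵖ) := fun v =>
    Finsupp.mapDomain e.symm (Finsupp.mapRange (dupIncl k A) (dupIncl_zero k A) v)
  have hF_add : ∀ v w, F (v + w) = F v + F w := by
    intro v w
    show Finsupp.mapDomain _ _ = _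
    rw [← Finsupp.mapDomain_add]
    congr 1
    ext m
    simp [Finsupp.mapRange_apply, dupIncl_add]
  have key : ∀ (b : Aᵐᵒᵖ) (m : NA),
      (dupIncl k A b) • (e.symm m) = e.symm (b • m) := by
    intro b m
    apply e.injective
    have h1 : e ((dupIncl k A b) • (e.symm m))
        = (op ((TrivSqZeroExt.inl ((b.unop, 0) : A × A)).fst.1)) • (e (e.symm m)) :=
      he (TrivSqZeroExt.inl ((b.unop, 0) : A × A)) (e.symm m)
    rw [h1, AddEquiv.apply_symm_apply, AddEquiv.apply_symm_apply]
    rfl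
  have hFtot : ∀ v : NA →₀ Aᵐᵒᵖ,
      Finsupp.linearCombination (Dup k A)ᵐᵒᵖ id (F v)
        = e.symm (Finsupp.linearCombination Aᵐᵒᵖ id v) := by
    intro v
    induction v using Finsupp.induction_linear with
    | zero => simp [F]
    | add v w hv hw => rw [hF_add, map_add, hv, hw, map_add, map_add]
    | single m b =>
      have hFs : F (Finsupp.single m b) = Finsupp.single (e.symm m) (dupIncl k A b) := by
        show Finsupp.mapDomain _ _ = _
        rw [Finsupp.mapRange_single, Finsupp.mapDomain_single]
      rw [hFs, Finsupp.linearCombination_single, Finsupp.linearCombination_single]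
      simpa using key b m
  have hFsmul : ∀ (x : Dup k A) (v : NA →₀ Aᵐᵒᵖ),
      F ((op x.fst.1) • v) = (op x) • F v := by
    intro x v
    have h1 : Finsupp.mapRange (dupIncl k A) (dupIncl_zero k A) ((op x.fst.1) • v)
        = (op x) • Finsupp.mapRange (dupIncl k A) (dupIncl_zero k A) v := by
      ext m
      simp only [Finsupp.smul_apply, Finsupp.mapRange_apply]
      rw [dupIncl_smul]
    show Finsupp.mapDomain _ _ = _
    rw [h1, Finsupp.mapDomain_smul]
  refine (Module.projective_def).mpr ⟨⟨⟨fun n => F (sA (e n)), ?_⟩, ?_⟩, ?_⟩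
  · intro n m
    show F (sA (e (n + m))) = F (sA (e n)) + F (sA (e m))
    rw [map_add, map_add, hF_add]
  · intro r n
    show F (sA (e (r • n))) = r • F (sA (e n))
    have h2 : e (r • n) = (op r.unop.fst.1) • e n := he r.unop n
    rw [h2, map_smul]
    exact hFsmul r.unop _
  · intro n
    show Finsupp.linearCombination _ id (F (sA (e n))) = n
    rw [hFtot, hsA, AddEquiv.symm_apply_apply]

end AuxDup

/-- Every finitely generated (right) module over a finite dimensional
hereditary algebra A, regarded as a module over the duplicated algebra Ā via the canonical
surjection Ā → A, has projective dimension at most 1 over Ā. -/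
theorem restriction_to_duplicated_algebra_has_pd_le_one
    (k A : Type u) [Field k] [IsAlgClosed k] [Ring A] [Algebra k A]
    [FiniteDimensional k A] (hA : IsHereditaryRing Aᵐᵒᵖ)
    (M : ModuleCat.{u} Aᵐᵒᵖ) [Module.Finite Aᵐᵒᵖ M] :
    PDimLE (Dup k A)ᵐᵒᵖ 1 ((resA k A).obj M) := by
  classical
  obtain ⟨n, φ, hφ⟩ := Module.Finite.exists_fin' Aᵐᵒᵖ M
  let P : ModuleCat.{u} (Dup k A)ᵐᵒᵖ := (resA k A).obj (ModuleCat.of Aᵐᵒᵖ (Fin n → Aᵐᵒᵖ))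
  let g : P ⟶ (resA k A).obj M := (resA k A).map (ModuleCat.ofHom φ : ModuleCat.of Aᵐᵒᵖ (Fin n → Aᵐᵒᵖ) ⟶ M)
  refine ⟨P, g.hom, ?_, ?_, ?_⟩
  · -- P is projective over the duplicated algebra
    refine projective_of_addEquiv k A (N := P) (NA := Fin n → Aᵐᵒᵖ)
      { toFun := fun p => p
        invFun := fun p => p
        left_inv := fun p => rfl
        right_inv := fun p => rfl
        map_add' := fun p q => rfl } ?_ inferInstance
    intro x m
    rfl
  · exact hφ
  · -- the kernel is projective over the duplicated algebra
    haveI hK : Module.Projective Aᵐᵒᵖ (LinearMap.ker φ) := proj_submodule_pi hA n _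
    show Module.Projective (Dup k A)ᵐᵒᵖ (LinearMap.ker g.hom)
    refine projective_of_addEquiv k A (NA := LinearMap.ker φ)
      { toFun := fun x => ⟨x.1, x.2⟩
        invFun := fun x => ⟨x.1, x.2⟩
        left_inv := fun x => rfl
        right_inv := fun x => rfl
        map_add' := fun x y => rfl } ?_ hK
    intro x m
    rfl
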